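/- In the reduction instance, for every path π=⟨v_0,…,v_k⟩ with v_0 = a_1 and every timing profile T=⟨t_0,…,t_{k−1}⟩ for π, the total reward obtained at vertices other than w is at most 1; that is, Σ_{i : v_i ≠ w} R(v_i, t_{i−1}, t_i) ≤ 1 (with t_{−1}:=0 and t_k:=y_n+K+1). -/

import Mathlib

open MeasureTheory
open scoped Classical

/-- Vertices of the reduction instance: for each hexagon index `i` the vertices
`a i, b i, c i, d i, e i, f i`, plus the two special vertices `u` and `w`. -/
inductive RVert : Type
  | a : ℕ → RVert
  | b : ℕ → RVert
  | c : ℕ → RVert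
  | d : ℕ → RVert
  | e : ℕ → RVert
  | f : ℕ → RVert
  | u : RVert
  | w : RVert
deriving DecidableEq

/-- `κ_i = Σ_{j=1}^{i} x_j` (so `κ_0 = 0`). -/
def kap (x : ℕ → ℕ) (i : ℕ) : ℕ := ∑ j ∈ Finset.Icc 1 i, x j

/-- `y_i = Σ_{j=1}^{i-1} κ_j` (so `y_0 = y_1 = 0`). -/
def yv (x : ℕ → ℕ) (i : ℕ) : ℕ := ∑ j ∈ Finset.Icc 1 (i - 1), kap x j

/-- `α_i = x_i / κ_n`. -/
noncomputable def alphav (x : ℕ → ℕ) (n i : ℕ) : ℝ := (x i : ℝ) / (kap x n : ℝ)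

/-- Edges of the reduction instance: `a_i→b_i, b_i→c_i, c_i→f_i, a_i→d_i,
d_i→e_i, e_i→f_i` for `1 ≤ i ≤ n`, `f_i→a_{i+1}` for `i < n`, `f_n→u`, `u→w`. -/
def redE (n : ℕ) : RVert → RVert → Prop := fun p q =>
  (∃ i, 1 ≤ i ∧ i ≤ n ∧
    ((p = RVert.a i ∧ q = RVert.b i) ∨ (p = RVert.b i ∧ q = RVert.c i) ∨
     (p = RVert.c i ∧ q = RVert.f i) ∨ (p = RVert.a i ∧ q = RVert.d i) ∨
     (p = RVert.d i ∧ q = RVert.e i) ∨ (p = RVert.e i ∧ q = RVert.f i))) ∨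
  (∃ i, 1 ≤ i ∧ i < n ∧ p = RVert.f i ∧ q = RVert.a (i + 1)) ∨
  (p = RVert.f n ∧ q = RVert.u) ∨ (p = RVert.u ∧ q = RVert.w)

/-- Edge lengths: `ℓ(b_i, c_i) = κ_i`, `ℓ(d_i, e_i) = κ_{i-1}`, all other edges
have length `0`. -/
noncomputable def redLen (x : ℕ → ℕ) : RVert → RVert → ℝ := fun p q =>
  match p, q with
  | RVert.b i, RVert.c j => if i = j then (kap x i : ℝ) else 0
  | RVert.d i, RVert.e j => if i = j then (kap x (i - 1) : ℝ) else 0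
  | _, _ => 0

/-- Assistance intervals: `𝓘(b_i) = 𝓘(c_i) = {[y_i, y_i + α_i]}` for
`1 ≤ i ≤ n`, `𝓘(w) = {[y_n + K, y_n + K + 1]}`, and `𝓘` is empty elsewhere. -/
noncomputable def redI (x : ℕ → ℕ) (n K : ℕ) : RVert → Finset (ℝ × ℝ) := fun p =>
  match p with
  | RVert.b i =>
      if 1 ≤ i ∧ i ≤ n then {((yv x i : ℝ), (yv x i : ℝ) + alphav x n i)} else ∅
  | RVert.c i =>
      if 1 ≤ i ∧ i ≤ n then {((yv x i : ℝ), (yv x i : ℝ) + alphav x n i)} else ∅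
  | RVert.w => {((yv x n : ℝ) + K, (yv x n : ℝ) + K + 1)}
  | _ => ∅

/-- `v 0, v 1, …, v k` is a path in the reduction instance. -/
def rIsPath (n : ℕ) (v : ℕ → RVert) (k : ℕ) : Prop :=
  ∀ i, i < k → redE n (v i) (v (i + 1))

/-- `ℓ_π(v_i)`: length of the path from `v 0` to `v i`. -/
noncomputable def rPathLen (x : ℕ → ℕ) (v : ℕ → RVert) (i : ℕ) : ℝ :=
  ∑ j ∈ Finset.range i, redLen x (v j) (v (j + 1))

/-- `ℓ⁺_π(v_i)` (with the convention `ℓ(v_k, v_{k+1}) = 0`). -/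
noncomputable def rEllPlus (x : ℕ → ℕ) (v : ℕ → RVert) (k i : ℕ) : ℝ :=
  rPathLen x v i + (if i < k then redLen x (v i) (v (i + 1)) / 2 else 0)

/-- Reward at a vertex `p` between times `t` and `t'`:
`R(p, t, t') = Σ_{I ∈ 𝓘(p)} λ([t,t'] ∩ I)`. -/
noncomputable def rvReward (x : ℕ → ℕ) (n K : ℕ) (p : RVert) (t t' : ℝ) : ℝ :=
  ∑ q ∈ redI x n K p, (volume (Set.Icc t t' ∩ Set.Icc q.1 q.2)).toReal

/-- `T 0, …, T (k-1)` is a timing profile for the path `v 0, …, v k` with time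
horizon `H = y_n + K + 1`. -/
def rIsTP (x : ℕ → ℕ) (v : ℕ → RVert) (k : ℕ) (H : ℝ) (T : ℕ → ℝ) : Prop :=
  (1 ≤ k → rEllPlus x v k 0 ≤ T 0) ∧
  (∀ i, i + 2 ≤ k → T i + (rEllPlus x v k (i + 1) - rEllPlus x v k i) ≤ T (i + 1)) ∧
  (1 ≤ k → T (k - 1) + (rEllPlus x v k k - rEllPlus x v k (k - 1)) ≤ H)

/-- Reward of a timing profile over horizon `H`:
`R(π, T) = Σ_{i=0}^{k} R(v_i, t_{i-1}, t_i)` with `t_{-1} = 0`, `t_k = H`. -/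
noncomputable def rProfReward (x : ℕ → ℕ) (n K : ℕ) (v : ℕ → RVert) (k : ℕ)
    (H : ℝ) (T : ℕ → ℝ) : ℝ :=
  ∑ i ∈ Finset.range (k + 1),
    rvReward x n K (v i) (if i = 0 then 0 else T (i - 1)) (if i = k then H else T i)

/-- Admissibility: the robot leaves `u` by time `y_n + K` and the path does not
end at `u`. -/
def rAdmissible (x : ℕ → ℕ) (n K : ℕ) (v : ℕ → RVert) (k : ℕ) (T : ℕ → ℝ) : Prop :=
  (∀ i, i < k → v i = RVert.u → T i ≤ (yv x n : ℝ) + K) ∧ v k ≠ RVert.u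

lemma redLen_nonneg (x : ℕ → ℕ) (p q : RVert) : 0 ≤ redLen x p q := by
  unfold redLen
  cases p <;> cases q <;> simp <;> split_ifs <;> positivity

lemma rPathLen_nonneg (x : ℕ → ℕ) (v : ℕ → RVert) (i : ℕ) : 0 ≤ rPathLen x v i :=
  Finset.sum_nonneg fun j _ => redLen_nonneg x (v j) (v (j + 1))

lemma rEllPlus_nonneg (x : ℕ → ℕ) (v : ℕ → RVert) (k i : ℕ) : 0 ≤ rEllPlus x v k i := by
  unfold rEllPlus
  have h1 := rPathLen_nonneg x v i
  have h2 := redLen_nonneg x (v i) (v (i + 1))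
  split_ifs <;> linarith

lemma rEllPlus_mono (x : ℕ → ℕ) (v : ℕ → RVert) (k i : ℕ) :
    rEllPlus x v k i ≤ rEllPlus x v k (i + 1) := by
  unfold rEllPlus rPathLen
  rw [Finset.sum_range_succ]
  have h1 := redLen_nonneg x (v i) (v (i + 1))
  have h2 := redLen_nonneg x (v (i + 1)) (v (i + 2))
  split_ifs <;> linarith

/-- **Lemma: reward away from `w` is at most 1.** For every path
from `a_1` and every timing profile, the total reward obtained at vertices
other than `w` is at most `1`. -/
theorem stmt14 (n : ℕ) (hn : 1 ≤ n) (x : ℕ → ℕ)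
    (hx : ∀ i, 1 ≤ i → i ≤ n → 0 < x i)
    (hmono : ∀ i j, 1 ≤ i → i ≤ j → j ≤ n → x i ≤ x j)
    (K : ℕ) (hK : 0 < K) (hKn : K ≤ kap x n)
    (v : ℕ → RVert) (k : ℕ) (hpath : rIsPath n v k) (h0 : v 0 = RVert.a 1)
    (T : ℕ → ℝ) (hT : rIsTP x v k ((yv x n : ℝ) + K + 1) T) :
    (∑ i ∈ (Finset.range (k + 1)).filter (fun i => v i ≠ RVert.w),
      rvReward x n K (v i) (if i = 0 then 0 else T (i - 1))
        (if i = k then (yv x n : ℝ) + K + 1 else T i)) ≤ 1 := by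
  classical
  set H : ℝ := (yv x n : ℝ) + K + 1 with hHdef
  have hH0 : 0 ≤ H := by positivity
  set U : Set ℝ :=
    ⋃ j ∈ Finset.Icc 1 n, Set.Icc (yv x j : ℝ) ((yv x j : ℝ) + alphav x n j) with hUdef
  have hUmeas : MeasurableSet U :=
    MeasurableSet.biUnion (Finset.Icc 1 n).countable_toSet fun j _ => measurableSet_Icc
  have hκ : 0 < kap x n :=
    lt_of_lt_of_le (hx 1 le_rfl hn)
      (Finset.single_le_sum (f := x) (fun j _ => Nat.zero_le _)
        (by simp [hn] : (1 : ℕ) ∈ Finset.Icc 1 n))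
  have hα : ∀ j, 0 ≤ alphav x n j := fun j => div_nonneg (by positivity) (by positivity)
  -- the union of assistance intervals away from w has measure at most 1
  have hμU : volume U ≤ 1 := by
    calc volume U
        ≤ ∑ j ∈ Finset.Icc 1 n,
            volume (Set.Icc (yv x j : ℝ) ((yv x j : ℝ) + alphav x n j)) :=
          measure_biUnion_finset_le _ _
      _ = ∑ j ∈ Finset.Icc 1 n, ENNReal.ofReal (alphav x n j) := by
          refine Finset.sum_congr rfl fun j _ => ?_
          rw [Real.volume_Icc]; ring_nf
      _ = ENNReal.ofReal (∑ j ∈ Finset.Icc 1 n, alphav x n j) :=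
          (ENNReal.ofReal_sum_of_nonneg fun j _ => hα j).symm
      _ = 1 := by
          have hsum : ∑ j ∈ Finset.Icc 1 n, alphav x n j = 1 := by
            unfold alphav
            rw [← Finset.sum_div]
            have hc : ∑ j ∈ Finset.Icc 1 n, (x j : ℝ) = (kap x n : ℝ) := by
              rw [kap]; push_cast; ring
            rw [hc, div_self (by exact_mod_cast hκ.ne')]
          rw [hsum, ENNReal.ofReal_one]
  -- the chain of times
  set g : ℕ → ℝ := fun i => if i = 0 then 0 else if i = k + 1 then H else T (i - 1) with hgdef
  have hg0 : g 0 = 0 := by simp [hgdef]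
  have hgend : g (k + 1) = H := by simp [hgdef]
  have hgmid : ∀ i, 1 ≤ i → i ≤ k → g i = T (i - 1) := by
    intro i h1 h2
    simp only [hgdef]
    rw [if_neg (by omega), if_neg (by omega)]
  have hstep : ∀ i, i ≤ k → g i ≤ g (i + 1) := by
    intro i hi
    rcases Nat.eq_zero_or_pos i with rfl | hipos
    · rw [hg0]
      rcases Nat.eq_zero_or_pos k with rfl | hk
      · rw [hgend]; exact hH0
      · rw [hgmid 1 le_rfl hk]
        exact le_trans (rEllPlus_nonneg x v k 0) (hT.1 hk)
    · rw [hgmid i hipos hi]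
      rcases eq_or_lt_of_le hi with rfl | hik
      · rw [hgend]
        have h3 := hT.2.2 hipos
        have h4 := rEllPlus_mono x v i (i - 1)
        rw [(by omega : i - 1 + 1 = i)] at h4
        linarith
      · rw [hgmid (i + 1) (by omega) hik]
        have h3 := hT.2.1 (i - 1) (by omega)
        have h4 := rEllPlus_mono x v k (i - 1)
        rw [(by omega : i - 1 + 1 = i)] at h3 h4
        simp only [Nat.add_sub_cancel]
        linarith
  have hg0le : ∀ m, m ≤ k + 1 → g 0 ≤ g m := by
    intro m
    induction m with
    | zero => intro _; exact le_rfl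
    | succ p ih => intro hm; exact le_trans (ih (by omega)) (hstep p (by omega))
  -- gluing measures of consecutive time intervals
  have pair : ∀ a b c : ℝ, a ≤ b → b ≤ c →
      volume (Set.Icc a b ∩ U) + volume (Set.Icc b c ∩ U) ≤ volume (Set.Icc a c ∩ U) := by
    intro a b c hab hbc
    have hms : MeasurableSet (Set.Icc b c ∩ U) := measurableSet_Icc.inter hUmeas
    have heq := measure_union_add_inter (μ := volume) (Set.Icc a b ∩ U) hms
    have hsub : (Set.Icc a b ∩ U) ∪ (Set.Icc b c ∩ U) ⊆ Set.Icc a c ∩ U := by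
      intro z hz
      rcases hz with hz | hz
      · exact ⟨Set.Icc_subset_Icc le_rfl hbc hz.1, hz.2⟩
      · exact ⟨Set.Icc_subset_Icc hab le_rfl hz.1, hz.2⟩
    have hint : volume ((Set.Icc a b ∩ U) ∩ (Set.Icc b c ∩ U)) = 0 := by
      refine measure_mono_null ?_ (Real.volume_singleton (a := b))
      intro z hz
      have h1 := hz.1.1.2
      have h2 := hz.2.1.1
      have : z = b := le_antisymm h1 h2
      simp [this]
    calc volume (Set.Icc a b ∩ U) + volume (Set.Icc b c ∩ U)
        = volume ((Set.Icc a b ∩ U) ∪ (Set.Icc b c ∩ U)) +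
            volume ((Set.Icc a b ∩ U) ∩ (Set.Icc b c ∩ U)) := heq.symm
      _ = volume ((Set.Icc a b ∩ U) ∪ (Set.Icc b c ∩ U)) := by rw [hint, add_zero]
      _ ≤ volume (Set.Icc a c ∩ U) := measure_mono hsub
  -- telescoping
  have tele : ∀ m, m ≤ k + 1 →
      ∑ i ∈ Finset.range m, volume (Set.Icc (g i) (g (i + 1)) ∩ U) ≤
        volume (Set.Icc (g 0) (g m) ∩ U) := by
    intro m
    induction m with
    | zero => intro _; simp
    | succ p ih =>
        intro hm
        rw [Finset.sum_range_succ]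
        calc ∑ i ∈ Finset.range p, volume (Set.Icc (g i) (g (i + 1)) ∩ U) +
              volume (Set.Icc (g p) (g (p + 1)) ∩ U)
            ≤ volume (Set.Icc (g 0) (g p) ∩ U) + volume (Set.Icc (g p) (g (p + 1)) ∩ U) :=
              add_le_add_left (ih (by omega)) _
          _ ≤ volume (Set.Icc (g 0) (g (p + 1)) ∩ U) :=
              pair _ _ _ (hg0le p (by omega)) (hstep p (by omega))
  -- per-term bound
  have hterm : ∀ i ∈ Finset.range (k + 1), v i ≠ RVert.w →
      rvReward x n K (v i) (if i = 0 then 0 else T (i - 1)) (if i = k then H else T i) ≤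
        (volume (Set.Icc (g i) (g (i + 1)) ∩ U)).toReal := by
    intro i hi hvw
    have hik : i ≤ k := by
      have := Finset.mem_range.mp hi; omega
    have hs : (if i = 0 then (0 : ℝ) else T (i - 1)) = g i := by
      by_cases h : i = 0
      · rw [if_pos h, h, hg0]
      · rw [if_neg h, hgmid i (by omega) hik]
    have he : (if i = k then H else T i) = g (i + 1) := by
      by_cases h : i = k
      · rw [if_pos h, h, hgend]
      · rw [if_neg h, hgmid (i + 1) (by omega) (by omega)]
        simp
    rw [hs, he]
    have hfin : volume (Set.Icc (g i) (g (i + 1)) ∩ U) ≠ ⊤ :=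
      ((measure_mono Set.inter_subset_left).trans_lt measure_Icc_lt_top).ne
    have key : ∀ j, 1 ≤ j → j ≤ n →
        (volume (Set.Icc (g i) (g (i + 1)) ∩
            Set.Icc (yv x j : ℝ) ((yv x j : ℝ) + alphav x n j))).toReal ≤
          (volume (Set.Icc (g i) (g (i + 1)) ∩ U)).toReal := by
      intro j h1 h2
      refine ENNReal.toReal_mono hfin (measure_mono (Set.inter_subset_inter_right _ ?_))
      intro z hz
      exact Set.mem_biUnion (Finset.mem_coe.mpr (Finset.mem_Icc.mpr ⟨h1, h2⟩)) hz
    have redI_b : ∀ j, redI x n K (RVert.b j) =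
        if 1 ≤ j ∧ j ≤ n then {((yv x j : ℝ), (yv x j : ℝ) + alphav x n j)} else ∅ :=
      fun j => rfl
    have redI_c : ∀ j, redI x n K (RVert.c j) =
        if 1 ≤ j ∧ j ≤ n then {((yv x j : ℝ), (yv x j : ℝ) + alphav x n j)} else ∅ :=
      fun j => rfl
    rcases hv : v i with j | j | j | j | j | j | _ | _
    · simp [rvReward, redI]
    · unfold rvReward
      rw [redI_b j]
      split_ifs with h
      · rw [Finset.sum_singleton]; exact key j h.1 h.2
      · simp
    · unfold rvReward
      rw [redI_c j]
      split_ifs with h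
      · rw [Finset.sum_singleton]; exact key j h.1 h.2
      · simp
    · simp [rvReward, redI]
    · simp [rvReward, redI]
    · simp [rvReward, redI]
    · simp [rvReward, redI]
    · exact absurd hv hvw
  -- put everything together
  have hENN : ∑ i ∈ Finset.range (k + 1), volume (Set.Icc (g i) (g (i + 1)) ∩ U) ≤ 1 :=
    le_trans (le_trans (tele (k + 1) le_rfl) (measure_mono Set.inter_subset_right)) hμU
  have hfin : ∀ i ∈ Finset.range (k + 1), volume (Set.Icc (g i) (g (i + 1)) ∩ U) ≠ ⊤ :=
    fun i _ => ((measure_mono Set.inter_subset_left).trans_lt measure_Icc_lt_top).ne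
  calc (∑ i ∈ (Finset.range (k + 1)).filter (fun i => v i ≠ RVert.w),
        rvReward x n K (v i) (if i = 0 then 0 else T (i - 1))
          (if i = k then H else T i))
      ≤ ∑ i ∈ (Finset.range (k + 1)).filter (fun i => v i ≠ RVert.w),
          (volume (Set.Icc (g i) (g (i + 1)) ∩ U)).toReal :=
        Finset.sum_le_sum fun i hi =>
          hterm i (Finset.mem_filter.mp hi).1 (Finset.mem_filter.mp hi).2
    _ ≤ ∑ i ∈ Finset.range (k + 1), (volume (Set.Icc (g i) (g (i + 1)) ∩ U)).toReal :=
        Finset.sum_le_sum_of_subset_of_nonneg (Finset.filter_subset _ _)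
          (fun i _ _ => ENNReal.toReal_nonneg)
    _ = (∑ i ∈ Finset.range (k + 1), volume (Set.Icc (g i) (g (i + 1)) ∩ U)).toReal :=
        (ENNReal.toReal_sum hfin).symm
    _ ≤ (1 : ENNReal).toReal := ENNReal.toReal_mono (by simp) hENN
    _ = 1 := by simp
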